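/- Let q be a nonzero integer, d ≥ 1, and let c_0, …, c_{d−1}, e_1, …, e_d be integers with e_d ∈ {1, −1}. Set h = F^d + Σ_{i=0}^{d−1} c_i F^i + Σ_{j=1}^{d} e_j V^j in the polynomial ring ℤ[F,V]. Then the quotient ring ℤ[F,V]/(FV − q, h) is a free ℤ-module of rank 2d, and the residue classes of the 2d monomials F^d, F^{d−1}, …, F, 1, V, …, V^{d−1} form a ℤ-basis of it. -/

import Mathlib

open MvPolynomial

/-- The variable `F` in `ℤ[F, V]`. -/
noncomputable def Fvar : MvPolynomial (Fin 2) ℤ := X 0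

/-- The variable `V` in `ℤ[F, V]`. -/
noncomputable def Vvar : MvPolynomial (Fin 2) ℤ := X 1

/-- The polynomial `h = F^d + Σ_{i=0}^{d-1} c_i F^i + Σ_{j=1}^{d} e_j V^j ∈ ℤ[F, V]`. -/
noncomputable def hPoly (d : ℕ) (c e : ℕ → ℤ) : MvPolynomial (Fin 2) ℤ :=
  Fvar ^ d + (∑ i ∈ Finset.range d, C (c i) * Fvar ^ i) +
    ∑ j ∈ Finset.Icc 1 d, C (e j) * Vvar ^ j

namespace Stmt4

lemma sq_one {x : ℤ} (h : x = 1 ∨ x = -1) : x * x = 1 := by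
  rcases h with h | h <;> rw [h] <;> norm_num

lemma sum_Icc_split {M : Type*} [AddCommMonoid M] (d : ℕ) (hd : 1 ≤ d) (f : ℕ → M) :
    ∑ j ∈ Finset.Icc 1 d, f j = (∑ j ∈ Finset.Icc 1 (d-1), f j) + f d := by
  obtain ⟨d', rfl⟩ : ∃ d', d = d'+1 := ⟨d-1, by omega⟩
  rw [Finset.sum_Icc_succ_top (by omega)]
  simp

/-- Evaluation of `ℤ[F,V]` at a commuting pair `(A, B)` in a ring `R`. -/
noncomputable def phi0 (R : Type) [Ring R] (A B : R) (h : A*B = B*A) :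
    MvPolynomial (Fin 2) ℤ →+* R := by
  letI : CommRing (Subring.closure ({A,B} : Set R)) :=
    Subring.closureCommRingOfComm (by
      rintro x (rfl|rfl) y (rfl|rfl) <;> first | rfl | exact h | exact h.symm)
  let f : MvPolynomial (Fin 2) ℤ →+* Subring.closure ({A,B} : Set R) :=
    eval₂Hom (Int.castRingHom _)
      ![⟨A, Subring.subset_closure (Set.mem_insert _ _)⟩,
        ⟨B, Subring.subset_closure (Set.mem_insert_of_mem _ rfl)⟩]
  exact (Subring.subtype _).comp f

/-- `δ d m` : the `m`-th standard basis vector of `ℤ^{2d}` (zero if `m ≥ 2d`). -/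
def δ (d m : ℕ) : Fin (2*d) → ℤ := fun k => if (k:ℕ) = m then 1 else 0

lemma δ_eq_single (d m : ℕ) (h : m < 2*d) :
    δ d m = Pi.single (⟨m, h⟩ : Fin (2*d)) 1 := by
  funext k; simp [δ, Pi.single_apply, Fin.ext_iff]

lemma δ_eq_basisFun (d m : ℕ) (h : m < 2*d) :
    δ d m = Pi.basisFun ℤ (Fin (2*d)) ⟨m, h⟩ := by
  rw [Pi.basisFun_apply]; exact δ_eq_single d m h

variable (q : ℤ) (d : ℕ) (c e : ℕ → ℤ)

/-- Multiplication by `F` in the basis `F^d, …, F, 1, V, …, V^{d-1}`. -/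
noncomputable def opA : Module.End ℤ (Fin (2*d) → ℤ) :=
  (Pi.basisFun ℤ (Fin (2*d))).constr ℤ fun k =>
    if (k:ℕ) = 0 then
      (-(∑ i ∈ Finset.range d, c i • δ d (d-1-i)) -
        q • ∑ j ∈ Finset.Icc 1 d, e j • δ d (d+j-1))
    else (if (k:ℕ) ≤ d then 1 else q) • δ d ((k:ℕ)-1)

/-- Multiplication by `V` in the basis `F^d, …, F, 1, V, …, V^{d-1}`. -/
noncomputable def opB : Module.End ℤ (Fin (2*d) → ℤ) :=
  (Pi.basisFun ℤ (Fin (2*d))).constr ℤ fun k =>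
    if (k:ℕ) = 2*d-1 then
      (-(e d)) • (δ d 0 + (∑ i ∈ Finset.range d, c i • δ d (d-i)) +
        ∑ j ∈ Finset.Icc 1 (d-1), e j • δ d (d+j))
    else (if (k:ℕ) < d then q else 1) • δ d ((k:ℕ)+1)

lemma opA_δ (m : ℕ) (h : m < 2*d) :
    opA q d c e (δ d m) =
      if m = 0 then
        (-(∑ i ∈ Finset.range d, c i • δ d (d-1-i)) -
          q • ∑ j ∈ Finset.Icc 1 d, e j • δ d (d+j-1))
      else (if m ≤ d then 1 else q) • δ d (m-1) := by
  rw [δ_eq_basisFun d m h, opA, Module.Basis.constr_basis]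

lemma opB_δ (m : ℕ) (h : m < 2*d) :
    opB q d c e (δ d m) =
      if m = 2*d-1 then
        (-(e d)) • (δ d 0 + (∑ i ∈ Finset.range d, c i • δ d (d-i)) +
          ∑ j ∈ Finset.Icc 1 (d-1), e j • δ d (d+j))
      else (if m < d then q else 1) • δ d (m+1) := by
  rw [δ_eq_basisFun d m h, opB, Module.Basis.constr_basis]

variable (hd : 1 ≤ d)
include hd

lemma opA_δ0 : opA q d c e (δ d 0) =
    (-(∑ i ∈ Finset.range d, c i • δ d (d-1-i)) -
      q • ∑ j ∈ Finset.Icc 1 d, e j • δ d (d+j-1)) := by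
  rw [opA_δ q d c e 0 (by omega)]; simp

omit hd in
lemma opA_δ_low (m : ℕ) (h1 : 1 ≤ m) (h2 : m ≤ d) :
    opA q d c e (δ d m) = δ d (m-1) := by
  rw [opA_δ q d c e m (by omega), if_neg (by omega), if_pos h2, one_smul]

omit hd in
lemma opA_δ_high (m : ℕ) (h1 : d < m) (h2 : m < 2*d) :
    opA q d c e (δ d m) = q • δ d (m-1) := by
  rw [opA_δ q d c e m h2, if_neg (by omega), if_neg (by omega)]

lemma opB_δ_low (m : ℕ) (h : m < d) :
    opB q d c e (δ d m) = q • δ d (m+1) := by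
  rw [opB_δ q d c e m (by omega), if_neg (by omega), if_pos h]

lemma opB_δ_mid (m : ℕ) (h1 : d ≤ m) (h2 : m < 2*d-1) :
    opB q d c e (δ d m) = δ d (m+1) := by
  rw [opB_δ q d c e m (by omega), if_neg (by omega), if_neg (by omega), one_smul]

lemma opB_δ_top : opB q d c e (δ d (2*d-1)) =
    (-(e d)) • (δ d 0 + (∑ i ∈ Finset.range d, c i • δ d (d-i)) +
      ∑ j ∈ Finset.Icc 1 (d-1), e j • δ d (d+j)) := by
  rw [opB_δ q d c e (2*d-1) (by omega)]; simp

variable (hed : e d = 1 ∨ e d = -1)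
include hed

lemma opAB_δ (m : ℕ) (hm : m < 2*d) :
    opA q d c e (opB q d c e (δ d m)) = q • δ d m := by
  rcases lt_or_ge m d with h | h
  · rw [opB_δ_low q d c e hd m h, map_smul,
      opA_δ_low q d c e (m+1) (by omega) (by omega)]
    simp
  rcases lt_or_ge m (2*d-1) with h2 | h2
  · rw [opB_δ_mid q d c e hd m h h2,
      opA_δ_high q d c e (m+1) (by omega) (by omega)]
    simp
  · have hm' : m = 2*d-1 := by omega
    subst hm'
    rw [opB_δ_top q d c e hd, map_smul, map_add, map_add, map_sum, map_sum]
    have e1 : ∀ i ∈ Finset.range d, opA q d c e (c i • δ d (d-i)) = c i • δ d (d-1-i) := by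
      intro i hi; simp only [Finset.mem_range] at hi
      rw [map_smul, opA_δ_low q d c e (d-i) (by omega) (by omega)]
      have h' : d - i - 1 = d - 1 - i := by omega
      rw [h']
    have e2 : ∀ j ∈ Finset.Icc 1 (d-1),
        opA q d c e (e j • δ d (d+j)) = q • (e j • δ d (d+j-1)) := by
      intro j hj; simp only [Finset.mem_Icc] at hj
      rw [map_smul, opA_δ_high q d c e (d+j) (by omega) (by omega), smul_comm]
    rw [Finset.sum_congr rfl e1, Finset.sum_congr rfl e2, ← Finset.smul_sum,
      opA_δ0 q d c e hd,
      sum_Icc_split d hd (fun j => e j • δ d (d+j-1))]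
    have hidx : d + d - 1 = 2*d - 1 := by omega
    rw [hidx]
    have := sq_one hed
    set S1 := ∑ i ∈ Finset.range d, c i • δ d (d-1-i)
    set S2 := ∑ j ∈ Finset.Icc 1 (d-1), e j • δ d (d+j-1)
    set x := δ d (2*d-1)
    have key : (-(e d)) • ((-(S1) - q • (S2 + e d • x)) + S1 + q • S2)
        = (e d * e d * q) • x := by module
    rw [key, this, one_mul]

lemma opBA_δ (m : ℕ) (hm : m < 2*d) :
    opB q d c e (opA q d c e (δ d m)) = q • δ d m := by
  rcases Nat.eq_zero_or_pos m with h0 | h0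
  · subst h0
    rw [opA_δ0 q d c e hd, map_sub, map_neg, map_sum, map_smul, map_sum]
    have e1 : ∀ i ∈ Finset.range d, opB q d c e (c i • δ d (d-1-i))
        = q • (c i • δ d (d-i)) := by
      intro i hi; simp only [Finset.mem_range] at hi
      rw [map_smul, opB_δ_low q d c e hd (d-1-i) (by omega), smul_comm]
      have h' : d - 1 - i + 1 = d - i := by omega
      rw [h']
    have e2 : ∀ j ∈ Finset.Icc 1 (d-1), opB q d c e (e j • δ d (d+j-1))
        = e j • δ d (d+j) := by
      intro j hj; simp only [Finset.mem_Icc] at hj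
      rw [map_smul, opB_δ_mid q d c e hd (d+j-1) (by omega) (by omega)]
      have h' : d + j - 1 + 1 = d + j := by omega
      rw [h']
    rw [sum_Icc_split d hd (fun j => opB q d c e (e j • δ d (d+j-1))),
      Finset.sum_congr rfl e1, ← Finset.smul_sum, Finset.sum_congr rfl e2]
    have hidx : d + d - 1 = 2*d - 1 := by omega
    rw [hidx, map_smul, opB_δ_top q d c e hd]
    have := sq_one hed
    set T1 := ∑ i ∈ Finset.range d, c i • δ d (d-i)
    set T2 := ∑ j ∈ Finset.Icc 1 (d-1), e j • δ d (d+j)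
    set x := δ d 0
    have key : -(q • T1) - q • (T2 + e d • (-(e d)) • (x + T1 + T2))
        = (e d * e d * q) • x + ((e d * e d * q) • T1 - q • T1)
          + ((e d * e d * q) • T2 - q • T2) := by module
    rw [key, this]; simp
  rcases le_or_gt m d with h | h
  · rw [opA_δ_low q d c e m h0 h, opB_δ_low q d c e hd (m-1) (by omega)]
    have h' : m - 1 + 1 = m := by omega
    rw [h']
  · rw [opA_δ_high q d c e m h (by omega), map_smul,
      opB_δ_mid q d c e hd (m-1) (by omega) (by omega)]
    have h' : m - 1 + 1 = m := by omega
    rw [h']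

lemma opAB : opA q d c e * opB q d c e = q • 1 := by
  apply (Pi.basisFun ℤ (Fin (2*d))).ext
  intro k
  rw [Pi.basisFun_apply, ← δ_eq_single d k k.isLt]
  rw [Module.End.mul_apply]
  rw [opAB_δ q d c e hd hed k k.isLt]
  simp

lemma opBA : opB q d c e * opA q d c e = q • 1 := by
  apply (Pi.basisFun ℤ (Fin (2*d))).ext
  intro k
  rw [Pi.basisFun_apply, ← δ_eq_single d k k.isLt]
  rw [Module.End.mul_apply]
  rw [opBA_δ q d c e hd hed k k.isLt]
  simp

lemma opComm : opA q d c e * opB q d c e = opB q d c e * opA q d c e := by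
  rw [opAB q d c e hd hed, opBA q d c e hd hed]

lemma opA_pow (m : ℕ) (hm : m ≤ d) : (opA q d c e ^ m) (δ d d) = δ d (d - m) := by
  induction m with
  | zero => simp
  | succ n ih =>
    rw [pow_succ', Module.End.mul_apply, ih (by omega),
      opA_δ_low q d c e (d-n) (by omega) (by omega)]
    have h' : d - n - 1 = d - (n+1) := by omega
    rw [h']

lemma opB_pow (m : ℕ) (hm : m ≤ d - 1) : (opB q d c e ^ m) (δ d d) = δ d (d + m) := by
  induction m with
  | zero => simp
  | succ n ih =>
    rw [pow_succ', Module.End.mul_apply, ih (by omega),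
      opB_δ_mid q d c e hd (d+n) (by omega) (by omega)]
    rfl

/-- The operator `h(A, B)`. -/
noncomputable def opH : Module.End ℤ (Fin (2*d) → ℤ) :=
  opA q d c e ^ d + (∑ i ∈ Finset.range d, c i • opA q d c e ^ i) +
    ∑ j ∈ Finset.Icc 1 d, e j • opB q d c e ^ j

lemma opH_δd : opH q d c e (δ d d) = 0 := by
  rw [opH, LinearMap.add_apply, LinearMap.add_apply, LinearMap.sum_apply,
    LinearMap.sum_apply]
  simp only [LinearMap.smul_apply]
  rw [opA_pow q d c e hd hed d le_rfl]
  have e1 : ∀ i ∈ Finset.range d, c i • (opA q d c e ^ i) (δ d d) = c i • δ d (d-i) := by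
    intro i hi; simp only [Finset.mem_range] at hi
    rw [opA_pow q d c e hd hed i (by omega)]
  have e2 : ∀ j ∈ Finset.Icc 1 (d-1),
      e j • (opB q d c e ^ j) (δ d d) = e j • δ d (d+j) := by
    intro j hj; simp only [Finset.mem_Icc] at hj
    rw [opB_pow q d c e hd hed j (by omega)]
  rw [sum_Icc_split d hd (fun j => e j • (opB q d c e ^ j) (δ d d)),
    Finset.sum_congr rfl e1, Finset.sum_congr rfl e2]
  have hpow : opB q d c e ^ d = opB q d c e * opB q d c e ^ (d-1) := by
    rw [← pow_succ', Nat.sub_add_cancel hd]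
  rw [hpow, Module.End.mul_apply, opB_pow q d c e hd hed (d-1) le_rfl,
    show d + (d-1) = 2*d-1 by omega, opB_δ_top q d c e hd]
  rw [show d - d = 0 by omega]
  rcases hed with h | h <;> rw [h] <;> module

lemma commAB : Commute (opA q d c e) (opB q d c e) := by
  unfold Commute SemiconjBy
  rw [opAB q d c e hd hed, opBA q d c e hd hed]

lemma opH_comm_opA : Commute (opH q d c e) (opA q d c e) := by
  unfold opH
  refine Commute.add_left (Commute.add_left ?_ ?_) ?_
  · exact (Commute.refl _).pow_left _
  · exact Commute.sum_left _ _ _ fun i _ => ((Commute.refl _).pow_left _).smul_left _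
  · exact Commute.sum_left _ _ _ fun j _ =>
      ((commAB q d c e hd hed).symm.pow_left _).smul_left _

lemma opH_comm_opB : Commute (opH q d c e) (opB q d c e) := by
  unfold opH
  refine Commute.add_left (Commute.add_left ?_ ?_) ?_
  · exact ((commAB q d c e hd hed).pow_left _)
  · exact Commute.sum_left _ _ _ fun i _ =>
      ((commAB q d c e hd hed).pow_left _).smul_left _
  · exact Commute.sum_left _ _ _ fun j _ => ((Commute.refl _).pow_left _).smul_left _

lemma opH_zero : opH q d c e = 0 := by
  apply (Pi.basisFun ℤ (Fin (2*d))).ext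
  intro k
  rw [Pi.basisFun_apply, ← δ_eq_single d k k.isLt, LinearMap.zero_apply]
  rcases le_or_gt (k:ℕ) d with h | h
  · rw [show ((k:ℕ)) = d - (d - (k:ℕ)) by omega,
      ← opA_pow q d c e hd hed (d - (k:ℕ)) (by omega),
      ← Module.End.mul_apply, ((opH_comm_opA q d c e hd hed).pow_right _).eq,
      Module.End.mul_apply, opH_δd q d c e hd hed, map_zero]
  · rw [show ((k:ℕ)) = d + ((k:ℕ) - d) by omega,
      ← opB_pow q d c e hd hed ((k:ℕ) - d) (by omega),
      ← Module.End.mul_apply, ((opH_comm_opB q d c e hd hed).pow_right _).eq,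
      Module.End.mul_apply, opH_δd q d c e hd hed, map_zero]

/-- Evaluation of `ℤ[F,V]` at the commuting pair of endomorphisms `(opA, opB)`. -/
noncomputable def phi : MvPolynomial (Fin 2) ℤ →+* Module.End ℤ (Fin (2*d) → ℤ) :=
  phi0 _ (opA q d c e) (opB q d c e) (opComm q d c e hd hed)

lemma phi_Fvar : phi q d c e hd hed Fvar = opA q d c e := by
  simp [phi, phi0, Fvar]

lemma phi_Vvar : phi q d c e hd hed Vvar = opB q d c e := by
  simp [phi, phi0, Vvar]

lemma phi_C (r : ℤ) : phi q d c e hd hed (C r) = (r : Module.End ℤ (Fin (2*d) → ℤ)) := by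
  simp [phi, phi0]

lemma phi_g1 : phi q d c e hd hed (Fvar * Vvar - C q) = 0 := by
  rw [map_sub, map_mul, phi_Fvar, phi_Vvar, phi_C, opAB q d c e hd hed]
  rw [zsmul_eq_mul, mul_one, sub_self]

lemma phi_h : phi q d c e hd hed (hPoly d c e) = opH q d c e := by
  rw [hPoly, map_add, map_add, map_sum, map_sum, map_pow, phi_Fvar, opH]
  congr 1
  · congr 1
    refine Finset.sum_congr rfl fun i _ => ?_
    rw [map_mul, map_pow, phi_Fvar, phi_C, ← zsmul_eq_mul]
  · refine Finset.sum_congr rfl fun j _ => ?_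
    rw [map_mul, map_pow, phi_Vvar, phi_C, ← zsmul_eq_mul]

lemma phi_vanish (p : MvPolynomial (Fin 2) ℤ)
    (hp : p ∈ Ideal.span {Fvar * Vvar - C q, hPoly d c e}) :
    phi q d c e hd hed p = 0 := by
  obtain ⟨a, b, rfl⟩ := Ideal.mem_span_pair.mp hp
  rw [map_add, map_mul, map_mul, phi_g1 q d c e hd hed, phi_h q d c e hd hed,
    opH_zero q d c e hd hed]
  simp

lemma phi_basis_monomial (i : Fin (2*d)) :
    phi q d c e hd hed
        (if (i : ℕ) ≤ d then Fvar ^ (d - (i : ℕ)) else Vvar ^ ((i : ℕ) - d)) (δ d d)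
      = δ d (i : ℕ) := by
  rcases le_or_gt (i:ℕ) d with h | h
  · rw [if_pos h, map_pow, phi_Fvar, opA_pow q d c e hd hed (d - (i:ℕ)) (by omega),
      show d - (d - (i:ℕ)) = (i:ℕ) by omega]
  · rw [if_neg (by omega), map_pow, phi_Vvar,
      opB_pow q d c e hd hed ((i:ℕ) - d) (by omega),
      show d + ((i:ℕ) - d) = (i:ℕ) by omega]

end Stmt4

open Stmt4 in
set_option maxHeartbeats 1000000 in
theorem stmt_4 (q : ℤ) (hq : q ≠ 0) (d : ℕ) (hd : 1 ≤ d) (c e : ℕ → ℤ)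
    (hed : e d = 1 ∨ e d = -1) :
    Module.Free ℤ
      (MvPolynomial (Fin 2) ℤ ⧸ Ideal.span {Fvar * Vvar - C q, hPoly d c e}) ∧
    ∃ b : Module.Basis (Fin (2 * d)) ℤ
        (MvPolynomial (Fin 2) ℤ ⧸ Ideal.span {Fvar * Vvar - C q, hPoly d c e}),
      ∀ i : Fin (2 * d),
        b i = Ideal.Quotient.mk (Ideal.span {Fvar * Vvar - C q, hPoly d c e})
          (if (i : ℕ) ≤ d then Fvar ^ (d - (i : ℕ)) else Vvar ^ ((i : ℕ) - d)) := by
  classical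
  set I : Ideal (MvPolynomial (Fin 2) ℤ) :=
    Ideal.span {Fvar * Vvar - C q, hPoly d c e} with hI
  let mk : MvPolynomial (Fin 2) ℤ →+* MvPolynomial (Fin 2) ℤ ⧸ I := Ideal.Quotient.mk I
  let μ : Fin (2 * d) → MvPolynomial (Fin 2) ℤ := fun i =>
    if (i : ℕ) ≤ d then Fvar ^ (d - (i : ℕ)) else Vvar ^ ((i : ℕ) - d)
  let bv : Fin (2 * d) → MvPolynomial (Fin 2) ℤ ⧸ I := fun i => mk (μ i)
  -- linear independence
  have hli : LinearIndependent ℤ bv := by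
    rw [Fintype.linearIndependent_iff]
    intro g hg
    have hmk : mk (∑ i, g i • μ i) = 0 := by
      rw [map_sum]
      rw [show (∑ i, mk (g i • μ i)) = ∑ i, g i • bv i from
        Finset.sum_congr rfl fun i _ => map_zsmul mk _ _]
      exact hg
    have hmem : (∑ i, g i • μ i) ∈ I := Ideal.Quotient.eq_zero_iff_mem.mp hmk
    have h0 := phi_vanish q d c e hd hed _ hmem
    rw [map_sum] at h0
    have h1 : (∑ i, g i • δ d (i : ℕ)) = 0 := by
      have h2 := congrArg (fun L : Module.End ℤ (Fin (2*d) → ℤ) => L (δ d d)) h0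
      simp only [LinearMap.zero_apply] at h2
      rw [LinearMap.sum_apply] at h2
      rw [show (∑ i, (phi q d c e hd hed (g i • μ i)) (δ d d))
          = ∑ i, g i • δ d (i : ℕ) from Finset.sum_congr rfl fun i _ => by
        rw [map_zsmul, LinearMap.smul_apply, phi_basis_monomial q d c e hd hed i]] at h2
      exact h2
    intro i
    have h3 := congrFun h1 i
    simp only [Finset.sum_apply, Pi.smul_apply, Stmt4.δ, smul_eq_mul, mul_ite, mul_one,
      mul_zero, Pi.zero_apply, Fin.val_eq_val] at h3
    rwa [Finset.sum_ite_eq Finset.univ i g, if_pos (Finset.mem_univ i)] at h3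
  -- notation for generators of the quotient
  set Fb : MvPolynomial (Fin 2) ℤ ⧸ I := mk Fvar with hFb
  set Vb : MvPolynomial (Fin 2) ℤ ⧸ I := mk Vvar with hVb
  have hCr : ∀ r : ℤ, mk (C r) = (r : MvPolynomial (Fin 2) ℤ ⧸ I) := by
    intro r
    rw [show (C r : MvPolynomial (Fin 2) ℤ) = (r : MvPolynomial (Fin 2) ℤ) by
      simp, map_intCast]
  have hFV : Fb * Vb = (q : MvPolynomial (Fin 2) ℤ ⧸ I) := by
    have h1 : mk (Fvar * Vvar - C q) = 0 :=
      Ideal.Quotient.eq_zero_iff_mem.mpr (Ideal.subset_span (Set.mem_insert _ _))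
    rw [map_sub, map_mul, sub_eq_zero, hCr] at h1
    exact h1
  have hH : Fb ^ d + (∑ i ∈ Finset.range d, c i • Fb ^ i)
      + ∑ j ∈ Finset.Icc 1 d, e j • Vb ^ j = 0 := by
    have h1 : mk (hPoly d c e) = 0 :=
      Ideal.Quotient.eq_zero_iff_mem.mpr
        (Ideal.subset_span (Set.mem_insert_of_mem _ rfl))
    rw [hPoly, map_add, map_add, map_sum, map_sum, map_pow] at h1
    rw [show (∑ i ∈ Finset.range d, mk (C (c i) * Fvar ^ i))
        = ∑ i ∈ Finset.range d, c i • Fb ^ i from Finset.sum_congr rfl fun i _ => by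
      rw [map_mul, map_pow, hCr, ← zsmul_eq_mul]] at h1
    rw [show (∑ j ∈ Finset.Icc 1 d, mk (C (e j) * Vvar ^ j))
        = ∑ j ∈ Finset.Icc 1 d, e j • Vb ^ j from Finset.sum_congr rfl fun j _ => by
      rw [map_mul, map_pow, hCr, ← zsmul_eq_mul]] at h1
    exact h1
  set N : Submodule ℤ (MvPolynomial (Fin 2) ℤ ⧸ I) := Submodule.span ℤ (Set.range bv)
    with hN
  have hbv_mem : ∀ i, bv i ∈ N := fun i => Submodule.subset_span (Set.mem_range_self i)
  have hFpow : ∀ m, m ≤ d → Fb ^ m ∈ N := by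
    intro m hm
    have hv : bv ⟨d - m, by omega⟩ = Fb ^ m := by
      show mk (μ _) = Fb ^ m
      simp only [μ]
      rw [if_pos (by simpa using by omega : ((⟨d - m, by omega⟩ : Fin (2*d)) : ℕ) ≤ d)]
      rw [map_pow]
      congr 1
      show d - (d - m) = m
      omega
    rw [← hv]; exact hbv_mem _
  have hVpow_mid : ∀ m, 1 ≤ m → m ≤ d - 1 → Vb ^ m ∈ N := by
    intro m h1 h2
    have hv : bv ⟨d + m, by omega⟩ = Vb ^ m := by
      show mk (μ _) = Vb ^ m
      simp only [μ]
      rw [if_neg (by simpa using by omega : ¬((⟨d + m, by omega⟩ : Fin (2*d)) : ℕ) ≤ d)]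
      rw [map_pow]
      congr 1
      show d + m - d = m
      omega
    rw [← hv]; exact hbv_mem _
  have hVpowd : Vb ^ d ∈ N := by
    have hsplit := sum_Icc_split d hd (fun j => e j • Vb ^ j)
    have hVd : e d • Vb ^ d
        = -(Fb ^ d + (∑ i ∈ Finset.range d, c i • Fb ^ i)
            + ∑ j ∈ Finset.Icc 1 (d-1), e j • Vb ^ j) := by
      rw [hsplit, ← add_assoc] at hH
      exact eq_neg_of_add_eq_zero_right hH
    have he2 : e d * e d = 1 := sq_one hed
    have h1 : Vb ^ d = e d • (e d • Vb ^ d) := by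
      rw [smul_smul, he2, one_smul]
    rw [h1, hVd]
    refine Submodule.smul_mem _ _ (Submodule.neg_mem _ ?_)
    refine Submodule.add_mem _ (Submodule.add_mem _ (hFpow d le_rfl) ?_) ?_
    · exact Submodule.sum_mem _ fun i hi =>
        Submodule.smul_mem _ _ (hFpow i (by simp at hi; omega))
    · exact Submodule.sum_mem _ fun j hj =>
        Submodule.smul_mem _ _ (hVpow_mid j (by simp at hj; omega) (by simp at hj; omega))
  have hVpow : ∀ m, m ≤ d → Vb ^ m ∈ N := by
    intro m hm
    rcases Nat.eq_zero_or_pos m with h0 | h0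
    · subst h0
      simpa using hFpow 0 (by omega)
    rcases eq_or_lt_of_le hm with h1 | h1
    · subst h1; exact hVpowd
    · exact hVpow_mid m h0 (by omega)
  have hFd1 : Fb ^ (d + 1) ∈ N := by
    have h0 := congrArg (fun z => z * Fb) hH
    simp only [add_mul, zero_mul, Finset.sum_mul] at h0
    rw [show (∑ i ∈ Finset.range d, (c i • Fb ^ i) * Fb)
        = ∑ i ∈ Finset.range d, c i • Fb ^ (i+1) from Finset.sum_congr rfl fun i _ => by
      rw [smul_mul_assoc, ← pow_succ]] at h0
    rw [show (∑ j ∈ Finset.Icc 1 d, (e j • Vb ^ j) * Fb)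
        = ∑ j ∈ Finset.Icc 1 d, (q * e j) • Vb ^ (j-1) from
        Finset.sum_congr rfl fun j hj => by
      simp only [Finset.mem_Icc] at hj
      rw [smul_mul_assoc, show Vb ^ j = Vb ^ (j-1) * Vb by rw [← pow_succ]; congr 1; omega,
        mul_assoc, mul_comm Vb Fb, hFV, ← zsmul_eq_mul', smul_smul,
        mul_comm (e j) q]] at h0
    rw [← pow_succ, add_assoc] at h0
    rw [eq_neg_of_add_eq_zero_left h0]
    refine Submodule.neg_mem _ (Submodule.add_mem _ ?_ ?_)
    · exact Submodule.sum_mem _ fun i hi =>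
        Submodule.smul_mem _ _ (hFpow (i+1) (by simp at hi; omega))
    · exact Submodule.sum_mem _ fun j hj =>
        Submodule.smul_mem _ _ (hVpow (j-1) (by simp at hj; omega))
  have hmulF : ∀ i : Fin (2*d), bv i * Fb ∈ N := by
    intro i
    rcases le_or_gt (i : ℕ) d with h | h
    · have hbvi : bv i = Fb ^ (d - (i:ℕ)) := by
        show mk (μ i) = _
        simp only [μ]
        rw [if_pos h, map_pow]
      rw [hbvi, ← pow_succ]
      rcases Nat.eq_zero_or_pos (i:ℕ) with h0 | h0
      · rw [h0]
        simpa using hFd1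
      · exact hFpow (d - (i:ℕ) + 1) (by omega)
    · have hbvi : bv i = Vb ^ ((i:ℕ) - d) := by
        show mk (μ i) = _
        simp only [μ]
        rw [if_neg (by omega), map_pow]
      have h3 : Vb ^ ((i:ℕ) - d) = Vb ^ ((i:ℕ) - d - 1) * Vb := by
        rw [← pow_succ]
        congr 1
        omega
      rw [hbvi, h3, mul_assoc, mul_comm Vb Fb, hFV, ← zsmul_eq_mul']
      exact Submodule.smul_mem _ _ (hVpow ((i:ℕ) - d - 1) (by omega))
  have hmulV : ∀ i : Fin (2*d), bv i * Vb ∈ N := by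
    intro i
    rcases lt_or_ge (i : ℕ) d with h | h
    · have hbvi : bv i = Fb ^ (d - (i:ℕ)) := by
        show mk (μ i) = _
        simp only [μ]
        rw [if_pos (by omega), map_pow]
      have h3 : Fb ^ (d - (i:ℕ)) = Fb ^ (d - (i:ℕ) - 1) * Fb := by
        rw [← pow_succ]
        congr 1
        omega
      rw [hbvi, h3, mul_assoc, hFV, ← zsmul_eq_mul']
      exact Submodule.smul_mem _ _ (hFpow (d - (i:ℕ) - 1) (by omega))
    · rcases eq_or_lt_of_le h with h1 | h1
      · have hbvi : bv i = 1 := by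
          show mk (μ i) = 1
          simp only [μ]
          rw [if_pos (by omega), show d - (i:ℕ) = 0 by omega, pow_zero, map_one]
        rw [hbvi, one_mul]
        simpa using hVpow 1 hd
      · have hbvi : bv i = Vb ^ ((i:ℕ) - d) := by
          show mk (μ i) = _
          simp only [μ]
          rw [if_neg (by omega), map_pow]
        rw [hbvi, ← pow_succ]
        exact hVpow ((i:ℕ) - d + 1) (by omega)
  have hsp : ⊤ ≤ Submodule.span ℤ (Set.range bv) := by
    rw [← hN]
    intro x hx
    clear hx
    obtain ⟨p, rfl⟩ := Ideal.Quotient.mk_surjective x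
    induction p using MvPolynomial.induction_on with
    | C a =>
      have hbv1 : bv ⟨d, by omega⟩ = 1 := by
        show mk (μ _) = 1
        simp only [μ]
        rw [if_pos (by simp), show d - ((⟨d, by omega⟩ : Fin (2*d)) : ℕ) = 0 by simp,
          pow_zero, map_one]
      have : (Ideal.Quotient.mk I) (C a) = a • bv ⟨d, by omega⟩ := by
        rw [hbv1, hCr a, zsmul_eq_mul, mul_one]
      rw [this]
      exact Submodule.smul_mem _ _ (hbv_mem _)
    | add p1 p2 hp1 hp2 =>
      rw [map_add]
      exact Submodule.add_mem _ hp1 hp2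
    | mul_X p1 i hp1 =>
      rw [map_mul]
      have hXmem : ∀ y ∈ N, y * mk (X i) ∈ N := by
        intro y hy
        induction hy using Submodule.span_induction with
        | mem x hx =>
          obtain ⟨j, rfl⟩ := hx
          fin_cases i
          · exact hmulF j
          · exact hmulV j
        | zero => simpa using Submodule.zero_mem N
        | add x y _ _ hx hy => rw [add_mul]; exact Submodule.add_mem _ hx hy
        | smul r x _ hx => rw [smul_mul_assoc]; exact Submodule.smul_mem _ _ hx
      exact hXmem _ hp1
  let b : Module.Basis (Fin (2*d)) ℤ (MvPolynomial (Fin 2) ℤ ⧸ I) := Module.Basis.mk hli hsp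
  have hb : ∀ i, b i = bv i := fun i => Module.Basis.mk_apply hli hsp i
  exact ⟨Module.Free.of_basis b, b, fun i => hb i⟩
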